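/- Let a, c, q, r be real numbers with q ≥ 0 and r > 0, and assume the detectability condition (c ≠ 0 or |a| < 1) and the stabilizability condition (q > 0 or |a| < 1). Then there exists a unique Σ∞ ≥ 0 satisfying the PO-SS algebraic Riccati equation Σ∞ = a²·Σ∞ + q − (a·c·Σ∞)²/(r + c²·Σ∞), and this solution is stabilizing, i.e. |a|·r/(r + c²·Σ∞) < 1. -/

import Mathlib

/-- under the scalar detectability (`c ≠ 0 ∨ |a| < 1`) and stabilizability
(`q > 0 ∨ |a| < 1`) conditions, the PO-SS algebraic Riccati equation
`Σ = a²Σ + q - (acΣ)²/(r + c²Σ)` has a unique nonnegative solution, and it is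
stabilizing, i.e. `|a|·r/(r + c²Σ) < 1`. -/
theorem stmt_11 (a c q r : ℝ) (hq : 0 ≤ q) (hr : 0 < r)
    (hdet : c ≠ 0 ∨ |a| < 1) (hstab : 0 < q ∨ |a| < 1) :
    ∃ S : ℝ, (0 ≤ S ∧ S = a ^ 2 * S + q - (a * c * S) ^ 2 / (r + c ^ 2 * S) ∧
        |a| * r / (r + c ^ 2 * S) < 1) ∧
      ∀ S' : ℝ, 0 ≤ S' → S' = a ^ 2 * S' + q - (a * c * S') ^ 2 / (r + c ^ 2 * S') →
        S' = S := by
  rcases eq_or_ne c 0 with hc | hc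
  · -- c = 0 case
    have ha : |a| < 1 := hdet.resolve_left (by simp [hc])
    have ha2 : a ^ 2 < 1 := by nlinarith [abs_nonneg a, sq_abs a]
    have h1 : (0:ℝ) < 1 - a ^ 2 := by linarith
    subst hc
    refine ⟨q / (1 - a ^ 2), ⟨by positivity, ?_, ?_⟩, ?_⟩
    · field_simp
      ring
    · rw [show (0:ℝ) ^ 2 * (q / (1 - a ^ 2)) = 0 by ring, add_zero, mul_div_assoc,
        div_self hr.ne', mul_one]
      exact ha
    · intro S' hS' hS'eq
      field_simp at hS'eq ⊢
      nlinarith [hS'eq]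
  · -- c ≠ 0 case
    have hc2 : (0:ℝ) < c ^ 2 := by positivity
    obtain ⟨D, hD⟩ : ∃ D : ℝ, D = r * (1 - a ^ 2) - q * c ^ 2 := ⟨_, rfl⟩
    have hdisc : (0:ℝ) ≤ D ^ 2 + 4 * c ^ 2 * q * r := by positivity
    obtain ⟨s, hsdef⟩ : ∃ s : ℝ, s = Real.sqrt (D ^ 2 + 4 * c ^ 2 * q * r) := ⟨_, rfl⟩
    have hs2 : s ^ 2 = D ^ 2 + 4 * c ^ 2 * q * r := by rw [hsdef]; exact Real.sq_sqrt hdisc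
    have hsnn : 0 ≤ s := hsdef ▸ Real.sqrt_nonneg _
    have habs : |D| ≤ s := by
      rw [hsdef, ← Real.sqrt_sq_eq_abs]
      exact Real.sqrt_le_sqrt (by nlinarith [mul_nonneg (mul_nonneg hc2.le hq) hr.le])
    obtain ⟨S, hSdef⟩ : ∃ S : ℝ, S = (s - D) / (2 * c ^ 2) := ⟨_, rfl⟩
    have h2S : 2 * c ^ 2 * S = s - D := by rw [hSdef]; field_simp
    have hS0 : 0 ≤ S := by
      rw [hSdef]
      apply div_nonneg _ (by positivity)
      linarith [le_abs_self D, habs]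
    have hsq : c ^ 2 * S ^ 2 + D * S - q * r = 0 := by
      have h4 : 4 * c ^ 2 * (c ^ 2 * S ^ 2 + D * S - q * r) = 0 := by
        linear_combination (2 * c ^ 2 * S + s + D) * h2S + hs2
      have h5 : (4 * c ^ 2 : ℝ) ≠ 0 := by positivity
      exact (mul_eq_zero.1 h4).resolve_left h5
    have hden : 0 < r + c ^ 2 * S := by positivity
    have hsD : 0 < s + D := by
      rcases hq.lt_or_eq with hq' | hq'
      · nlinarith [mul_pos (mul_pos hc2 hq') hr, neg_le_abs D, habs]
      · have ha : |a| < 1 := hstab.resolve_left (by rw [← hq']; exact lt_irrefl 0)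
        have ha2 : a ^ 2 < 1 := by nlinarith [abs_nonneg a, sq_abs a]
        have hDpos : 0 < D := by rw [hD, ← hq']; nlinarith
        linarith [le_abs_self D, habs]
    have hARE : (a * c * S) ^ 2 / (r + c ^ 2 * S) = a ^ 2 * S + q - S := by
      rw [div_eq_iff hden.ne']
      linear_combination hsq - S * hD
    refine ⟨S, ⟨hS0, by rw [hARE]; ring, ?_⟩, ?_⟩
    · -- stabilizing
      rw [div_lt_one hden]
      rcases le_or_gt 1 (|a|) with ha1 | ha1
      · have hq' : 0 < q := by
          rcases hstab with h | h
          · exact h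
          · linarith
        have hSpos : 0 < S := by
          rcases hS0.lt_or_eq with h | h
          · exact h
          · exfalso; rw [← h] at hsq; nlinarith [mul_pos hq' hr]
        have ha2 : |a| ≤ a ^ 2 := by nlinarith [sq_abs a]
        have hid : (r + c ^ 2 * S) * S - |a| * r * S
            = q * r + (a ^ 2 - |a|) * r * S + q * c ^ 2 * S := by
          linear_combination hsq - S * hD
        have hpos : (|a| * r) * S < (r + c ^ 2 * S) * S := by
          nlinarith [mul_pos hq' hr, mul_nonneg (mul_nonneg (sub_nonneg.2 ha2) hr.le) hS0,
            mul_nonneg (mul_nonneg hq'.le hc2.le) hS0]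
        exact (mul_lt_mul_iff_of_pos_right hSpos).1 hpos
      · have h1 : |a| * r < r := mul_lt_of_lt_one_left hr ha1
        linarith [mul_nonneg hc2.le hS0]
    · -- uniqueness
      intro S' hS' hS'eq
      have hden' : 0 < r + c ^ 2 * S' := by positivity
      have hx : (a * c * S') ^ 2 / (r + c ^ 2 * S') = a ^ 2 * S' + q - S' := by
        linarith [hS'eq]
      have hARE' : (a * c * S') ^ 2 = (a ^ 2 * S' + q - S') * (r + c ^ 2 * S') := by
        rw [← hx, div_mul_cancel₀ _ hden'.ne']
      have hsq' : c ^ 2 * S' ^ 2 + D * S' - q * r = 0 := by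
        linear_combination hARE' + S' * hD
      have hfac : (S' - S) * (c ^ 2 * (S' + S) + D) = 0 := by
        linear_combination hsq' - hsq
      rcases mul_eq_zero.1 hfac with h | h
      · linarith [sub_eq_zero.1 h]
      · exfalso
        have h' : 2 * c ^ 2 * S' + s + D = 0 := by linear_combination 2 * h - h2S
        linarith [mul_nonneg hc2.le hS', hsD]
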